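/- Let H_1, ..., H_m be symmetric n×n real matrices such that for every v in R^n, the n×m matrix A_v with columns H_1 v, ..., H_m v has rank at most one. Then there exist real numbers α_1, ..., α_m and a symmetric matrix H in R^{n×n} such that H_j = α_j H for all j = 1, ..., m. -/

import Mathlib

open scoped Matrix

lemma minor_of_rank_le_one {n m : ℕ} (M : Matrix (Fin n) (Fin m) ℝ) (h : M.rank ≤ 1)
    (i i' : Fin n) (j k : Fin m) : M i j * M i' k = M i' j * M i k := by
  by_contra hc
  set x : Fin n → ℝ := fun a => M a j with hxdef
  set y : Fin n → ℝ := fun a => M a k with hydef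
  have hx : x ∈ LinearMap.range M.mulVecLin := ⟨Pi.single j 1, by
    ext a; simp [Matrix.mulVecLin_apply, hxdef]⟩
  have hy : y ∈ LinearMap.range M.mulVecLin := ⟨Pi.single k 1, by
    ext a; simp [Matrix.mulVecLin_apply, hydef]⟩
  have hli : LinearIndependent ℝ ![x, y] := by
    rw [LinearIndependent.pair_iff]
    intro s t hst
    have e1 : s * M i j + t * M i k = 0 := congrFun hst i
    have e2 : s * M i' j + t * M i' k = 0 := congrFun hst i'
    constructor
    · by_contra hs
      apply hc
      have h1 : s * (M i j * M i' k) = s * (M i' j * M i k) := by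
        linear_combination M i' k * e1 - M i k * e2
      exact mul_left_cancel₀ hs h1
    · by_contra ht
      apply hc
      have h1 : t * (M i j * M i' k) = t * (M i' j * M i k) := by
        linear_combination M i j * e2 - M i' j * e1
      exact mul_left_cancel₀ ht h1
  have hli2 : LinearIndependent ℝ
      (fun b : Fin 2 => (![(⟨x, hx⟩ : LinearMap.range M.mulVecLin), ⟨y, hy⟩] b)) := by
    apply LinearIndependent.of_comp (LinearMap.range M.mulVecLin).subtype
    convert hli using 1
    ext b a
    fin_cases b <;> rfl
    rfl
  have := hli2.fintype_card_le_finrank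
  simp only [Fintype.card_fin] at this
  have hrk : (2 : ℕ) ≤ M.rank := this
  omega

/-- Rank one columns: if for every `v` the matrix with columns `H j *ᵥ v` has
rank at most one, then all the symmetric matrices `H j` are multiples of a
single symmetric matrix `H`. -/
theorem rank_one_columns {n m : ℕ} (H : Fin m → Matrix (Fin n) (Fin n) ℝ)
    (hsymm : ∀ j, (H j).IsSymm)
    (hrank : ∀ v : Fin n → ℝ,
      (Matrix.of fun (i : Fin n) (j : Fin m) => (H j *ᵥ v) i).rank ≤ 1) :
    ∃ (α : Fin m → ℝ) (H₀ : Matrix (Fin n) (Fin n) ℝ), H₀.IsSymm ∧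
      ∀ j, H j = α j • H₀ := by
  -- key minor identity
  have key : ∀ (j k : Fin m) (v : Fin n → ℝ) (i i' : Fin n),
      (H j *ᵥ v) i * (H k *ᵥ v) i' = (H j *ᵥ v) i' * (H k *ᵥ v) i := by
    intro j k v i i'
    exact minor_of_rank_le_one _ (hrank v) i i' j k
  by_cases hz : ∀ j, H j = 0
  · exact ⟨0, 0, Matrix.isSymm_zero, fun j => by simp [hz j]⟩
  push_neg at hz
  obtain ⟨j₀, hj₀⟩ := hz
  set A := H j₀ with hAdef
  obtain ⟨r, s, hrs⟩ : ∃ r s, A r s ≠ 0 := by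
    by_contra h
    push_neg at h
    exact hj₀ (by ext r s; exact h r s)
  -- column relation
  have h1 : ∀ (j : Fin m) (i k p : Fin n), A i p * (H j) k p = A k p * (H j) i p := by
    intro j i k p
    have := key j₀ j (Pi.single p 1) i k
    simpa using this
  -- cross relation
  have h2 : ∀ (j : Fin m) (i k p q : Fin n),
      A i p * (H j) k q + A i q * (H j) k p = A k p * (H j) i q + A k q * (H j) i p := by
    intro j i k p q
    have hk := key j₀ j (Pi.single p 1 + Pi.single q 1) i k
    simp only [Matrix.mulVec_add, Matrix.mulVec_single, mul_one, Pi.add_apply,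
      MulOpposite.op_one, one_smul, Matrix.col_apply] at hk
    have e1 := h1 j i k p
    have e2 := h1 j i k q
    linear_combination hk - e1 - e2
  refine ⟨fun j => (H j) r s / A r s, A, hsymm j₀, fun j => ?_⟩
  ext i p
  have hci : A i s * H j r s = A r s * H j i s := h1 j i r s
  have hrp : A r p * H j r s = A r s * H j r p := by
    have h0 := h1 j p s r
    have a1 : A p r = A r p := (hsymm j₀).apply r p
    have a2 : A s r = A r s := (hsymm j₀).apply r s
    have b1 : H j s r = H j r s := (hsymm j).apply r s
    have b2 : H j p r = H j r p := (hsymm j).apply r p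
    rw [a1, a2, b1, b2] at h0
    exact h0
  have h2' := h2 j i r p s
  have hmain : A r s * (H j i p * A r s) = A r s * (H j r s * A i p) := by
    linear_combination (-(A r s)) * h2' + (A r p) * hci - (A i s) * hrp
  have : H j i p * A r s = H j r s * A i p := mul_left_cancel₀ hrs hmain
  have := this
  simp only [Matrix.smul_apply, smul_eq_mul]
  field_simp
  linarith [this]
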